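/- The expected influence σ^(V,A) is monotonically increasing in the initial set: for all sets A ⊆ B ⊆ V, σ^(V,A) ≤ σ^(V,B). -/

import Mathlib

open Finset

noncomputable def cPath {V : Type*} [Fintype V] [DecidableEq V]
    (w : V → V → ℝ) (W D : Finset V) (j : V) : ℝ := by
  classical
  exact ∑' k : ℕ, ∑ x : Fin (k + 1) → V,
    if x 0 = j ∧ Function.Injective x ∧
        (∀ m : Fin (k + 1), (m : ℕ) < k → x m ∈ W \ D) ∧ x (Fin.last k) ∈ D
    then ∏ i : Fin k, w (x i.succ) (x i.castSucc) else 0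

noncomputable def cPathVia {V : Type*} [Fintype V] [DecidableEq V]
    (w : V → V → ℝ) (W D : Finset V) (j v : V) : ℝ := by
  classical
  exact ∑' k : ℕ, ∑ x : Fin (k + 1) → V,
    if x 0 = j ∧ Function.Injective x ∧
        (∀ m : Fin (k + 1), (m : ℕ) < k → x m ∈ W \ D) ∧ x (Fin.last k) ∈ D ∧
        (∃ u : Fin (k + 1), (u : ℕ) < k ∧ x u = v)
    then ∏ i : Fin k, w (x i.succ) (x i.castSucc) else 0

noncomputable def sigmaInfl {V : Type*} [Fintype V] [DecidableEq V]
    (w : V → V → ℝ) (W A : Finset V) : ℝ :=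
  ∑ j ∈ W, cPath w W A j

def pjv {V : Type*} (w : V → V → ℝ) (j v : V) : List V → ℝ
  | [] => w v j
  | l :: ls => w l j * pjv w l v ls

noncomputable def fPoly {ι : Type*} [DecidableEq ι] (m : ℕ) (T : Finset ι) (x : ι → ℝ) : ℝ :=
  (Nat.factorial m : ℝ) * ∑ S ∈ T.powersetCard m, ∏ s ∈ S, x s

section aux

variable {V : Type*} [Fintype V] [DecidableEq V]

open Classical in
/-- The `k`-th term of the series defining `cPath`. -/
noncomputable def pterm (w : V → V → ℝ) (W D : Finset V) (j : V) (k : ℕ) : ℝ :=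
  ∑ x : Fin (k + 1) → V,
    if x 0 = j ∧ Function.Injective x ∧
        (∀ m : Fin (k + 1), (m : ℕ) < k → x m ∈ W \ D) ∧ x (Fin.last k) ∈ D
    then ∏ i : Fin k, w (x i.succ) (x i.castSucc) else 0

lemma cPath_eq_tsum (w : V → V → ℝ) (W D : Finset V) (j : V) :
    cPath w W D j = ∑' k : ℕ, pterm w W D j k := by
  unfold cPath pterm
  congr

lemma pterm_eq_zero (w : V → V → ℝ) (W D : Finset V) (j : V) {k : ℕ}
    (hk : Fintype.card V ≤ k) : pterm w W D j k = 0 := by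
  refine Finset.sum_eq_zero fun x _ => ?_
  rw [if_neg]
  rintro ⟨-, hinj, -⟩
  have := Fintype.card_le_of_injective x hinj
  simp only [Fintype.card_fin] at this
  omega

lemma summable_pterm (w : V → V → ℝ) (W D : Finset V) (j : V) :
    Summable (pterm w W D j) :=
  summable_of_ne_finset_zero (s := Finset.range (Fintype.card V))
    (fun k hk => pterm_eq_zero w W D j (by simpa using hk))

lemma pterm_zero (w : V → V → ℝ) (W D : Finset V) (j : V) :
    pterm w W D j 0 = if j ∈ D then (1 : ℝ) else 0 := by
  have h1 : pterm w W D j 0 = ∑ v : V, if v = j ∧ j ∈ D then (1:ℝ) else 0 := by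
    refine Fintype.sum_equiv (Equiv.funUnique (Fin 1) V) _ _ fun x => ?_
    have hinj : Function.Injective x := Function.injective_of_subsingleton _
    by_cases h : x 0 = j ∧ j ∈ D
    · rw [if_pos, if_pos]
      · simp
      · show Equiv.funUnique (Fin 1) V x = j ∧ j ∈ D
        exact h
      · refine ⟨h.1, hinj, fun m hm => absurd hm (by omega), ?_⟩
        show x 0 ∈ D
        rw [h.1]; exact h.2
    · rw [if_neg, if_neg]
      · rintro ⟨hx, hD⟩
        exact h ⟨hx, hD⟩
      · rintro ⟨hx, -, -, hD⟩
        exact h ⟨hx, by rwa [← hx]⟩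
  rw [h1]
  by_cases hD : j ∈ D <;> simp [hD]

lemma pterm_succ (w : V → V → ℝ) (W D : Finset V) (j : V) (k : ℕ) :
    pterm w W D j (k + 1) =
      if j ∈ W \ D then ∑ i, w i j * pterm w (W.erase j) D i k else 0 := by
  classical
  -- rewrite the LHS as a sum over `Fin.cons a y`
  have hsum : pterm w W D j (k + 1) =
      ∑ p : V × (Fin (k + 1) → V),
        (if p.1 = j ∧ p.1 ∈ W \ D ∧ Function.Injective p.2 ∧
            (∀ m : Fin (k + 1), (m : ℕ) < k → p.2 m ∈ (W.erase j) \ D) ∧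
            p.2 (Fin.last k) ∈ D
          then w (p.2 0) p.1 * ∏ i : Fin k, w (p.2 i.succ) (p.2 i.castSucc) else 0) := by
    unfold pterm
    rw [← Fintype.sum_equiv (Fin.consEquiv (fun _ : Fin (k + 2) => V)) _ _ (fun p => rfl)]
    refine Fintype.sum_congr _ _ ?_
    rintro ⟨a, y⟩
    simp only [Fin.consEquiv_apply]
    by_cases hD : a = j ∧ a ∈ W \ D ∧ Function.Injective y ∧
        (∀ m : Fin (k + 1), (m : ℕ) < k → y m ∈ (W.erase j) \ D) ∧ y (Fin.last k) ∈ D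
    · obtain ⟨haj, haW, hyi, hym, hyl⟩ := hD
      subst haj
      have hjD : a ∉ D := (Finset.mem_sdiff.mp haW).2
      have hrange : a ∉ Set.range y := by
        rintro ⟨m, hm⟩
        rcases lt_or_eq_of_le (Nat.lt_succ_iff.mp m.isLt) with h | h
        · exact (Finset.mem_erase.mp (Finset.mem_sdiff.mp (hym m h)).1).1 hm
        · have hml : m = Fin.last k := Fin.ext h
          rw [hml] at hm
          rw [hm] at hyl
          exact hjD hyl
      rw [if_pos, if_pos ⟨rfl, haW, hyi, hym, hyl⟩]
      · rw [Fin.prod_univ_succ]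
        have h2 : ∀ i : Fin k,
            w ((Fin.cons a y : Fin (k + 2) → V) (Fin.succ i).succ)
                ((Fin.cons a y : Fin (k + 2) → V) (Fin.succ i).castSucc)
              = w (y i.succ) (y i.castSucc) := fun i => by
          rw [← Fin.succ_castSucc]
          simp
        simp only [h2]
        simp
      · refine ⟨Fin.cons_zero _ _, Fin.cons_injective_iff.mpr ⟨hrange, hyi⟩, ?_, ?_⟩
        · intro m
          refine Fin.cases ?_ ?_ m
          · intro _
            simpa using haW
          · intro i hi
            have hik : (i : ℕ) < k := by simpa using hi
            simpa using Finset.mem_sdiff.mpr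
              ⟨(Finset.mem_erase.mp (Finset.mem_sdiff.mp (hym i hik)).1).2,
               (Finset.mem_sdiff.mp (hym i hik)).2⟩
        · rw [← Fin.succ_last, Fin.cons_succ]; exact hyl
    · rw [if_neg hD, if_neg]
      rintro ⟨h0, hinj, hm, hl⟩
      rw [Fin.cons_zero] at h0
      subst h0
      have hinj' : Function.Injective y ∧ a ∉ Set.range y := by
        have := Fin.cons_injective_iff.mp hinj
        exact ⟨this.2, this.1⟩
      have haW : a ∈ W \ D := by
        have := hm 0 (by simp)
        simpa using this
      refine hD ⟨rfl, haW, hinj'.1, ?_, ?_⟩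
      · intro m hmk
        have h1 : y m ∈ W \ D := by
          have := hm m.succ (by simpa using Nat.succ_lt_succ hmk)
          simpa using this
        have h2 : y m ≠ a := fun h => hinj'.2 ⟨m, h⟩
        rw [Finset.mem_sdiff] at h1 ⊢
        exact ⟨Finset.mem_erase.mpr ⟨h2, h1.1⟩, h1.2⟩
      · rw [← Fin.succ_last, Fin.cons_succ] at hl; exact hl
  rw [hsum, Fintype.sum_prod_type]
  by_cases hjW : j ∈ W \ D
  · rw [if_pos hjW]
    rw [Finset.sum_eq_single j]
    · unfold pterm
      simp_rw [Finset.mul_sum, mul_ite, mul_zero]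
      rw [Finset.sum_comm]
      refine Finset.sum_congr rfl fun y _ => ?_
      by_cases hR : Function.Injective y ∧
          (∀ m : Fin (k + 1), (m : ℕ) < k → y m ∈ (W.erase j) \ D) ∧
          y (Fin.last k) ∈ D
      · rw [if_pos (⟨trivial, hjW, hR.1, hR.2.1, hR.2.2⟩ : True ∧ _)]
        have hcond : ∀ i : V,
            (y 0 = i ∧ Function.Injective y ∧
              (∀ m : Fin (k + 1), (m : ℕ) < k → y m ∈ (W.erase j) \ D) ∧
              y (Fin.last k) ∈ D) ↔ y 0 = i := fun i => ⟨fun h => h.1, fun h => ⟨h, hR⟩⟩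
        simp only [hcond]
        rw [Finset.sum_ite_eq]
        simp
      · rw [if_neg, Eq.comm]
        · refine Finset.sum_eq_zero fun i _ => if_neg ?_
          rintro ⟨-, h2, h3, h4⟩
          exact hR ⟨h2, h3, h4⟩
        · rintro ⟨-, -, h2, h3, h4⟩
          exact hR ⟨h2, h3, h4⟩
    · intro a _ ha
      refine Finset.sum_eq_zero fun y _ => if_neg ?_
      rintro ⟨h, -⟩; exact ha h
    · intro h; exact absurd (Finset.mem_univ j) h
  · rw [if_neg hjW]
    refine Finset.sum_eq_zero fun a _ => Finset.sum_eq_zero fun y _ => if_neg ?_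
    rintro ⟨rfl, h, -⟩; exact hjW h

lemma cPath_rec (w : V → V → ℝ) (W D : Finset V) (j : V) :
    cPath w W D j = (if j ∈ D then (1 : ℝ) else 0) +
      (if j ∈ W \ D then ∑ i, w i j * cPath w (W.erase j) D i else 0) := by
  rw [cPath_eq_tsum, Summable.tsum_eq_zero_add (summable_pterm w W D j), pterm_zero]
  congr 1
  simp_rw [pterm_succ]
  by_cases h : j ∈ W \ D
  · rw [if_pos h]
    simp_rw [if_pos h]
    rw [Summable.tsum_finsetSum (fun i _ => (summable_pterm w (W.erase j) D i).mul_left _)]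
    refine Finset.sum_congr rfl fun i _ => ?_
    rw [tsum_mul_left, cPath_eq_tsum]
  · rw [if_neg h]
    simp_rw [if_neg h]
    exact tsum_zero

lemma cPath_nonneg (w : V → V → ℝ) (hw0 : ∀ i j : V, 0 ≤ w i j)
    (W D : Finset V) (j : V) : 0 ≤ cPath w W D j := by
  rw [cPath_eq_tsum]
  refine tsum_nonneg fun k => Finset.sum_nonneg fun x _ => ?_
  by_cases h : x 0 = j ∧ Function.Injective x ∧
      (∀ m : Fin (k + 1), (m : ℕ) < k → x m ∈ W \ D) ∧ x (Fin.last k) ∈ D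
  · rw [if_pos h]
    exact Finset.prod_nonneg fun i _ => hw0 _ _
  · rw [if_neg h]

lemma cPath_of_mem (w : V → V → ℝ) (W D : Finset V) {j : V} (hj : j ∈ D) :
    cPath w W D j = 1 := by
  rw [cPath_rec, if_pos hj, if_neg (fun h => (Finset.mem_sdiff.mp h).2 hj), add_zero]

lemma cPath_of_not_mem (w : V → V → ℝ) {W : Finset V} (D : Finset V) {j : V}
    (hjW : j ∉ W) (hjD : j ∉ D) : cPath w W D j = 0 := by
  rw [cPath_rec, if_neg hjD, if_neg (fun h => hjW (Finset.mem_sdiff.mp h).1), zero_add]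

lemma cPath_le_one (w : V → V → ℝ) (hw0 : ∀ i j : V, 0 ≤ w i j)
    (hw1 : ∀ j : V, ∑ i ∈ Finset.univ.erase j, w i j ≤ 1) :
    ∀ (W D : Finset V) (j : V), cPath w W D j ≤ 1 := by
  intro W
  induction W using Finset.strongInduction with
  | _ W ih =>
    intro D j
    rw [cPath_rec]
    by_cases hD : j ∈ D
    · rw [if_pos hD, if_neg (fun h => (Finset.mem_sdiff.mp h).2 hD), add_zero]
    · rw [if_neg hD, zero_add]
      by_cases hW : j ∈ W \ D
      · rw [if_pos hW]
        have hjW : j ∈ W := (Finset.mem_sdiff.mp hW).1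
        have hsub : W.erase j ⊂ W := Finset.erase_ssubset hjW
        have h0 : cPath w (W.erase j) D j = 0 :=
          cPath_of_not_mem w D (Finset.notMem_erase j W) hD
        calc ∑ i, w i j * cPath w (W.erase j) D i
            = ∑ i ∈ Finset.univ.erase j, w i j * cPath w (W.erase j) D i := by
              rw [← Finset.sum_erase_add _ _ (Finset.mem_univ j), h0, mul_zero, add_zero]
          _ ≤ ∑ i ∈ Finset.univ.erase j, w i j := by
              refine Finset.sum_le_sum fun i _ => ?_
              calc w i j * cPath w (W.erase j) D i ≤ w i j * 1 :=
                    mul_le_mul_of_nonneg_left (ih _ hsub D i) (hw0 i j)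
                _ = w i j := mul_one _
          _ ≤ 1 := hw1 j
      · rw [if_neg hW]
        exact zero_le_one

lemma cPath_mono (w : V → V → ℝ) (hw0 : ∀ i j : V, 0 ≤ w i j)
    (hw1 : ∀ j : V, ∑ i ∈ Finset.univ.erase j, w i j ≤ 1) {A B : Finset V}
    (hAB : A ⊆ B) : ∀ (W : Finset V) (j : V), cPath w W A j ≤ cPath w W B j := by
  intro W
  induction W using Finset.strongInduction with
  | _ W ih =>
    intro j
    by_cases hB : j ∈ B
    · rw [cPath_of_mem w W B hB]
      exact cPath_le_one w hw0 hw1 W A j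
    · have hA : j ∉ A := fun h => hB (hAB h)
      rw [cPath_rec w W A, cPath_rec w W B, if_neg hA, if_neg hB, zero_add, zero_add]
      by_cases hW : j ∈ W
      · rw [if_pos (Finset.mem_sdiff.mpr ⟨hW, hA⟩), if_pos (Finset.mem_sdiff.mpr ⟨hW, hB⟩)]
        refine Finset.sum_le_sum fun i _ => ?_
        exact mul_le_mul_of_nonneg_left (ih _ (Finset.erase_ssubset hW) i) (hw0 i j)
      · rw [if_neg (fun h => hW (Finset.mem_sdiff.mp h).1),
          if_neg (fun h => hW (Finset.mem_sdiff.mp h).1)]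

end aux

theorem stmt11 {V : Type*} [Fintype V] [DecidableEq V] (w : V → V → ℝ)
    (hw0 : ∀ i j : V, 0 ≤ w i j)
    (hw1 : ∀ j : V, ∑ i ∈ Finset.univ.erase j, w i j ≤ 1)
    (A B : Finset V) (hAB : A ⊆ B) :
    sigmaInfl w Finset.univ A ≤ sigmaInfl w Finset.univ B := by
  refine Finset.sum_le_sum fun j _ => ?_
  exact cPath_mono w hw0 hw1 hAB Finset.univ j
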